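/- Let 𝒳 ⊆ ℝ with 0 ∈ 𝒳, let B, C : 𝒳 → ℝ with B nonconstant on 𝒳, and let G_1, G_2, G_3 : 𝒳 → ℝ, G_{12}, G_{13}, G_{23} : 𝒳² → ℝ, G_{123} : 𝒳³ → ℝ, and E_1, E_2, E_3 : 𝒳² → ℝ be functions such that for all x, y, u ∈ 𝒳: (i) x·G_1(x) + x·y·G_{12}(x,y) + x·u·G_{13}(x,u) + x·y·u·G_{123}(x,y,u) = E_1(y,u)(B(x) − B(0)) + C(x) − C(0); (ii) y·G_2(y) + x·y·G_{12}(x,y) + y·u·G_{23}(y,u) + x·y·u·G_{123}(x,y,u) = E_2(x,u)(B(y) − B(0)) + C(y) − C(0); (iii) u·G_3(u) + x·u·G_{13}(x,u) + y·u·G_{23}(y,u) + x·y·u·G_{123}(x,y,u) = E_3(x,y)(B(u) − B(0)) + C(u) − C(0). Then there exists θ ∈ ℝ such that x·y·u·G_{123}(x,y,u) = θ (B(x) − B(0))(B(y) − B(0))(B(u) − B(0)) for all x, y, u ∈ 𝒳. -/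

import Mathlib

/-- Third-order case of the Besag-style functional-equation argument: the
triple-wise factor `x·y·u·G₁₂₃(x,y,u)` is necessarily a scalar multiple of the
tensor product of centered sufficient statistics
`(B x - B 0)(B y - B 0)(B u - B 0)`. -/
theorem besag_triplewise_factorization
    (𝒳 : Set ℝ) (h0 : (0 : ℝ) ∈ 𝒳)
    (B C : ℝ → ℝ)
    (hBnonconst : ∃ x ∈ 𝒳, ∃ y ∈ 𝒳, B x ≠ B y)
    (G₁ G₂ G₃ : ℝ → ℝ) (G₁₂ G₁₃ G₂₃ : ℝ → ℝ → ℝ) (G₁₂₃ : ℝ → ℝ → ℝ → ℝ)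
    (E₁ E₂ E₃ : ℝ → ℝ → ℝ)
    (h₁ : ∀ x ∈ 𝒳, ∀ y ∈ 𝒳, ∀ u ∈ 𝒳,
      x * G₁ x + x * y * G₁₂ x y + x * u * G₁₃ x u + x * y * u * G₁₂₃ x y u =
        E₁ y u * (B x - B 0) + (C x - C 0))
    (h₂ : ∀ x ∈ 𝒳, ∀ y ∈ 𝒳, ∀ u ∈ 𝒳,
      y * G₂ y + x * y * G₁₂ x y + y * u * G₂₃ y u + x * y * u * G₁₂₃ x y u =
        E₂ x u * (B y - B 0) + (C y - C 0))
    (h₃ : ∀ x ∈ 𝒳, ∀ y ∈ 𝒳, ∀ u ∈ 𝒳,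
      u * G₃ u + x * u * G₁₃ x u + y * u * G₂₃ y u + x * y * u * G₁₂₃ x y u =
        E₃ x y * (B u - B 0) + (C u - C 0)) :
    ∃ θ : ℝ, ∀ x ∈ 𝒳, ∀ y ∈ 𝒳, ∀ u ∈ 𝒳,
      x * y * u * G₁₂₃ x y u = θ * (B x - B 0) * (B y - B 0) * (B u - B 0) := by
  -- find a point a ∈ 𝒳 with B a ≠ B 0
  obtain ⟨p, hp, q, hq, hpq⟩ := hBnonconst
  obtain ⟨a, ha, hba⟩ : ∃ a ∈ 𝒳, B a - B 0 ≠ 0 := by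
    by_cases hpz : B p = B 0
    · exact ⟨q, hq, fun h => hpq (by linarith [sub_eq_zero.mp h])⟩
    · exact ⟨p, hp, sub_ne_zero.mpr hpz⟩
  -- difference identities
  have hA : ∀ x ∈ 𝒳, ∀ y ∈ 𝒳, ∀ u ∈ 𝒳,
      x * y * u * G₁₂₃ x y u =
        (E₁ y u - E₁ y 0 - E₁ 0 u + E₁ 0 0) * (B x - B 0) := by
    intro x hx y hy u hu
    have e1 := h₁ x hx y hy u hu
    have e2 := h₁ x hx y hy 0 h0
    have e3 := h₁ x hx 0 h0 u hu
    have e4 := h₁ x hx 0 h0 0 h0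
    ring_nf at e1 e2 e3 e4 ⊢
    linarith
  have hM : ∀ x ∈ 𝒳, ∀ y ∈ 𝒳, ∀ u ∈ 𝒳,
      x * y * u * G₁₂₃ x y u =
        (E₃ x y - E₃ x 0 - E₃ 0 y + E₃ 0 0) * (B u - B 0) := by
    intro x hx y hy u hu
    have e1 := h₃ x hx y hy u hu
    have e2 := h₃ x hx 0 h0 u hu
    have e3 := h₃ 0 h0 y hy u hu
    have e4 := h₃ 0 h0 0 h0 u hu
    ring_nf at e1 e2 e3 e4 ⊢
    linarith
  have hD : ∀ x ∈ 𝒳, ∀ y ∈ 𝒳, ∀ u ∈ 𝒳,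
      x * y * u * G₁₂₃ x y u =
        (E₂ x u - E₂ x 0 - E₂ 0 u + E₂ 0 0) * (B y - B 0) := by
    intro x hx y hy u hu
    have e1 := h₂ x hx y hy u hu
    have e2 := h₂ x hx y hy 0 h0
    have e3 := h₂ 0 h0 y hy u hu
    have e4 := h₂ 0 h0 y hy 0 h0
    ring_nf at e1 e2 e3 e4 ⊢
    linarith
  set b : ℝ → ℝ := fun x => B x - B 0 with hb
  set A : ℝ → ℝ → ℝ := fun y u => E₁ y u - E₁ y 0 - E₁ 0 u + E₁ 0 0 with hAdef
  refine ⟨A a a / (b a * b a), ?_⟩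
  intro x hx y hy u hu
  -- key: A y u = (A a a / (b a)^2) * b y * b u
  have key : A y u * (b a * b a) = A a a * b y * b u := by
    -- M a y * b a = A y a * b a, hence (from u-slot) A y u * b a = A y a * b u
    have t1 : A y u * b a = (E₃ a y - E₃ a 0 - E₃ 0 y + E₃ 0 0) * b u := by
      rw [← hA a ha y hy u hu]; exact hM a ha y hy u hu
    have t2 : A y a * b a = (E₃ a y - E₃ a 0 - E₃ 0 y + E₃ 0 0) * b a := by
      rw [← hA a ha y hy a ha]; exact hM a ha y hy a ha
    have t3 : A y a * b a = (E₂ a a - E₂ a 0 - E₂ 0 a + E₂ 0 0) * b y := by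
      rw [← hA a ha y hy a ha]; exact hD a ha y hy a ha
    have t4 : A a a * b a = (E₂ a a - E₂ a 0 - E₂ 0 a + E₂ 0 0) * b a := by
      rw [← hA a ha a ha a ha]; exact hD a ha a ha a ha
    have hM' : (E₃ a y - E₃ a 0 - E₃ 0 y + E₃ 0 0) = A y a :=
      (mul_right_cancel₀ hba t2.symm)
    have hD' : (E₂ a a - E₂ a 0 - E₂ 0 a + E₂ 0 0) = A a a :=
      (mul_right_cancel₀ hba t4.symm)
    rw [hM'] at t1
    rw [hD'] at t3
    calc A y u * (b a * b a) = (A y u * b a) * b a := by ring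
      _ = (A y a * b u) * b a := by rw [t1]
      _ = (A y a * b a) * b u := by ring
      _ = (A a a * b y) * b u := by rw [t3]
      _ = A a a * b y * b u := by ring
  have hx' := hA x hx y hy u hu
  rw [hx']
  have hba2 : b a * b a ≠ 0 := mul_ne_zero hba hba
  rw [div_mul_eq_mul_div, div_mul_eq_mul_div, div_mul_eq_mul_div, eq_div_iff hba2]
  calc A y u * (B x - B 0) * (b a * b a)
      = (A y u * (b a * b a)) * (B x - B 0) := by ring
    _ = (A a a * b y * b u) * (B x - B 0) := by rw [key]
    _ = A a a * (B x - B 0) * (B y - B 0) * (B u - B 0) := by rw [hb]; ring
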